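/- The bracket of log D with a symbol, defined by [log D, f(z)Dᵏ] = Σ_{ℓ≥1} ((-1)^{ℓ+1}/ℓ) f^{(ℓ)}(z) D^{k-ℓ}, is a derivation of the algebra of integer-order pseudodifferential symbols: [log D, A∘B] = [log D, A]∘B + A∘[log D, B]. -/

import Mathlib

noncomputable section

/-- Generalized binomial coefficient `binom(m, l)` for integer `m`. -/
def qbinom (m : ℤ) (l : ℕ) : ℚ :=
  (∏ i ∈ Finset.range l, ((m : ℚ) - (i : ℚ))) / (Nat.factorial l : ℚ)

/-- Finite order condition for a symbol `Σ_{k ≤ N} p_k Dᵏ`. -/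
def OrderBdd {R : Type*} [Zero R] (A : ℤ → R) : Prop := ∃ N : ℤ, ∀ k : ℤ, N < k → A k = 0

/-- Product of pseudodifferential symbols via `Dᵐ ∘ u = Σ binom(m,l) u^{(l)} D^{m-l}`. -/
def pdMul {R : Type*} [CommRing R] [Algebra ℚ R] (d : R → R) (A B : ℤ → R) : ℤ → R :=
  fun m => ∑ᶠ p : ℤ × ℕ, qbinom p.1 p.2 • (A p.1 * d^[p.2] (B (m - p.1 + (p.2 : ℤ))))

/-- `[log D, ·]` : on a monomial `f Dᵏ` it is `Σ_{l≥1} ((-1)^{l+1}/l) f^{(l)} D^{k-l}`;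
in terms of coefficient families, the coefficient of `Dᵐ` of `[log D, A]` is
`Σ_{l≥1} ((-1)^{l+1}/l) d^l (A (m+l))`. -/
def adLog {R : Type*} [CommRing R] [Algebra ℚ R] (d : R → R) (A : ℤ → R) : ℤ → R :=
  fun m => ∑ᶠ l : ℕ, (if l = 0 then (0 : ℚ) else ((-1) ^ (l + 1) / l)) • d^[l] (A (m + l))

namespace AdLogAux

open Finset

/-! ### qbinom basics -/

def prodd (m : ℤ) (l : ℕ) : ℚ := ∏ i ∈ Finset.range l, ((m : ℚ) - (i : ℚ))

lemma qbinom_def' (m : ℤ) (l : ℕ) : qbinom m l = prodd m l / (Nat.factorial l : ℚ) := rfl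

lemma prodd_succ (m : ℤ) (l : ℕ) : prodd m (l+1) = prodd m l * ((m:ℚ) - l) := by
  simp [prodd, Finset.prod_range_succ]

lemma prodd_shift (m : ℤ) (l : ℕ) : prodd (m+1) (l+1) = ((m:ℚ)+1) * prodd m l := by
  rw [prodd, Finset.prod_range_succ']
  simp only [Nat.cast_zero, sub_zero, Int.cast_add, Int.cast_one]
  rw [mul_comm, prodd]
  congr 1
  apply Finset.prod_congr rfl
  intro i _
  push_cast
  ring

lemma qbinom_zero_right (m : ℤ) : qbinom m 0 = 1 := by simp [qbinom]

lemma qbinom_succ_mul (m : ℤ) (l : ℕ) :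
    ((l:ℚ)+1) * qbinom m (l+1) = qbinom m l * ((m:ℚ) - l) := by
  rw [qbinom_def', qbinom_def', prodd_succ, Nat.factorial_succ]
  have h1 : (Nat.factorial l : ℚ) ≠ 0 := by exact_mod_cast Nat.factorial_ne_zero l
  have h2 : ((l:ℚ)+1) ≠ 0 := by positivity
  push_cast
  field_simp

lemma qbinom_pascal (m : ℤ) (l : ℕ) :
    qbinom (m+1) (l+1) = qbinom m (l+1) + qbinom m l := by
  rw [qbinom_def', qbinom_def', qbinom_def', prodd_shift, prodd_succ]
  have h1 : (Nat.factorial (l+1) : ℚ) ≠ 0 := by exact_mod_cast Nat.factorial_ne_zero (l+1)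
  have h2 : (Nat.factorial l : ℚ) ≠ 0 := by exact_mod_cast Nat.factorial_ne_zero l
  rw [Nat.factorial_succ]
  push_cast
  have h3 : ((l:ℚ)+1) ≠ 0 := by positivity
  field_simp
  ring

lemma qbinom_zero_left (l : ℕ) : qbinom 0 l = if l = 0 then 1 else 0 := by
  cases l with
  | zero => simp [qbinom_zero_right]
  | succ n =>
    simp only [Nat.succ_ne_zero, if_false]
    rw [qbinom]
    rw [Finset.prod_eq_zero (Finset.mem_range.2 (Nat.succ_pos n))]
    · simp
    · simp

lemma qbinom_cast_eq_zero {l i : ℕ} (h : l < i) : qbinom (l : ℤ) i = 0 := by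
  rw [qbinom, Finset.prod_eq_zero (Finset.mem_range.2 h)]
  · simp
  · simp

lemma qbinom_self (n : ℕ) : qbinom (n : ℤ) n = 1 := by
  induction n with
  | zero => simp [qbinom_zero_right]
  | succ k ih =>
    have : ((k:ℤ)+1) = (((k+1):ℕ):ℤ) := by push_cast; ring
    rw [← this] at *
    rw [qbinom_pascal, ih, qbinom_cast_eq_zero (Nat.lt_succ_self k), zero_add]

lemma qbinom_shift_mul (m : ℤ) (l : ℕ) :
    ((m:ℚ)+1-l) * qbinom (m+1) l = ((m:ℚ)+1) * qbinom m l := by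
  have h1 := prodd_shift m l
  have h2 := prodd_succ (m+1) l
  rw [qbinom_def', qbinom_def']
  have h3 : (Nat.factorial l : ℚ) ≠ 0 := by exact_mod_cast Nat.factorial_ne_zero l
  rw [h1] at h2
  push_cast at h2 ⊢
  field_simp
  linarith [h2]

/-! ### Vandermonde -/

lemma qbinom_vandermonde (a b : ℤ) : ∀ s : ℕ,
    ∑ t ∈ Finset.range (s+1), qbinom a t * qbinom b (s-t) = qbinom (a+b) s := by
  induction a using Int.induction_on with
  | zero =>
    intro s
    rw [Finset.sum_eq_single 0]
    · simp [qbinom_zero_left, qbinom_zero_right]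
    · intro t _ ht
      simp [qbinom_zero_left, ht]
    · intro h; exact absurd (Finset.mem_range.2 (Nat.succ_pos s)) h
  | succ k ih =>
    intro s
    cases s with
    | zero => simp [qbinom_zero_right]
    | succ s =>
      rw [Finset.sum_range_succ']
      simp only [Nat.succ_sub_succ]
      have e1 : ∀ t, qbinom ((k:ℤ)+1) (t+1) = qbinom k (t+1) + qbinom k t :=
        fun t => qbinom_pascal k t
      calc ∑ t ∈ Finset.range (s+1), qbinom ((k:ℤ)+1) (t+1) * qbinom b (s-t)
            + qbinom ((k:ℤ)+1) 0 * qbinom b (s+1-0)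
          = (∑ t ∈ Finset.range (s+1), qbinom (k:ℤ) (t+1) * qbinom b (s+1-(t+1))
              + qbinom (k:ℤ) 0 * qbinom b (s+1-0))
            + ∑ t ∈ Finset.range (s+1), qbinom (k:ℤ) t * qbinom b (s-t) := by
            simp only [e1, add_mul, Finset.sum_add_distrib, qbinom_zero_right,
              Nat.succ_sub_succ, Nat.sub_zero]
            ring
        _ = qbinom ((k:ℤ)+b) (s+1) + qbinom ((k:ℤ)+b) s := by
            rw [← Finset.sum_range_succ' (fun t => qbinom (k:ℤ) t * qbinom b (s+1-t)) (s+1),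
              ih (s+1), ih s]
        _ = qbinom ((k:ℤ)+1+b) (s+1) := by
            rw [show (k:ℤ)+1+b = ((k:ℤ)+b)+1 by ring, qbinom_pascal]
  | pred k ih =>
    have pas : ∀ t, qbinom (-(k:ℤ)-1) (t+1) = qbinom (-(k:ℤ)) (t+1) - qbinom (-(k:ℤ)-1) t := by
      intro t
      have := qbinom_pascal (-(k:ℤ)-1) t
      rw [show (-(k:ℤ)-1+1) = -(k:ℤ) by ring] at this
      linarith [this]
    intro s
    induction s with
    | zero => simp [qbinom_zero_right]
    | succ s ihs =>
      rw [Finset.sum_range_succ']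
      simp only [Nat.succ_sub_succ, pas, Nat.sub_zero]
      have : ∑ t ∈ Finset.range (s+1),
          (qbinom (-(k:ℤ)) (t+1) - qbinom (-(k:ℤ)-1) t) * qbinom b (s-t)
          = ∑ t ∈ Finset.range (s+1), qbinom (-(k:ℤ)) (t+1) * qbinom b (s+1-(t+1))
            - ∑ t ∈ Finset.range (s+1), qbinom (-(k:ℤ)-1) t * qbinom b (s-t) := by
        simp only [sub_mul, Finset.sum_sub_distrib, Nat.succ_sub_succ]
      rw [this, ihs]
      have h2 : ∑ t ∈ Finset.range (s+1), qbinom (-(k:ℤ)) (t+1) * qbinom b (s+1-(t+1))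
          = qbinom (-(k:ℤ)+b) (s+1) - qbinom (-(k:ℤ)) 0 * qbinom b (s+1-0) := by
        rw [← ih (s+1), Finset.sum_range_succ' (fun t => qbinom (-(k:ℤ)) t * qbinom b (s+1-t)) (s+1)]
        ring
      rw [h2]
      have h3 := qbinom_pascal (-(k:ℤ)-1+b) s
      rw [show (-(k:ℤ)-1+b+1) = -(k:ℤ)+b by ring] at h3
      simp only [qbinom_zero_right, Nat.sub_zero, one_mul]
      rw [show -(k:ℤ)-1+b = -(k:ℤ)+b-1 by ring] at *
      linarith [h3]

/-! ### the key coefficient identity -/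

lemma lemA (i t : ℕ) :
    (-1:ℚ)^t * i * qbinom ((t:ℤ)+i) i = ((t:ℚ)+i) * qbinom (-(i:ℤ)) t := by
  induction t with
  | zero => simp [qbinom_self, qbinom_zero_right]
  | succ t ih =>
    have h1 := qbinom_shift_mul ((t:ℤ)+i) i
    have h2 := qbinom_succ_mul (-(i:ℤ)) t
    push_cast at h1 h2 ih ⊢
    have hcan : ((t:ℚ)+1) ≠ 0 := by positivity
    apply mul_left_cancel₀ hcan
    have e1 : (-1:ℚ)^(t+1) = (-1:ℚ)^t * (-1) := by rw [pow_succ]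
    rw [show ((t:ℤ)+1+(i:ℤ)) = ((t:ℤ)+(i:ℤ))+1 by ring, e1]
    linear_combination (((-1:ℚ)^t)*(-1)*(i:ℚ)) * h1 + (-( (t:ℚ)+(i:ℚ)+1)) * ih
      + (-((t:ℚ)+1+(i:ℚ))) * h2

def cc (l : ℕ) : ℚ := if l = 0 then 0 else ((-1)^(l+1) / l)

lemma cc_mul (i t : ℕ) (hi : i ≠ 0) :
    cc (t+i) * qbinom ((t:ℤ)+(i:ℤ)) i = cc i * qbinom (-(i:ℤ)) t := by
  have hti : t + i ≠ 0 := by omega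
  have h := lemA i t
  rw [cc, cc, if_neg hti, if_neg hi]
  have e1 : (-1:ℚ)^(t+i+1) = (-1:ℚ)^t * (-1:ℚ)^i * (-1) := by
    rw [pow_add, pow_add, pow_one]
  have e2 : (-1:ℚ)^(i+1) = (-1:ℚ)^i * (-1) := by rw [pow_succ]
  rw [e1, e2]
  have hii : ((i:ℚ)) ≠ 0 := Nat.cast_ne_zero.2 hi
  have htii : ((t+i:ℕ):ℚ) ≠ 0 := Nat.cast_ne_zero.2 hti
  push_cast at htii ⊢
  rw [div_mul_eq_mul_div, div_mul_eq_mul_div, div_eq_div_iff htii hii]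
  linear_combination (-(-1:ℚ)^i) * h

lemma key (i : ℕ) (hi : i ≠ 0) (p : ℤ) (s : ℕ) :
    ∑ t ∈ Finset.range (s+1), cc (t+i) * qbinom ((t:ℤ)+(i:ℤ)) i * qbinom p (s-t)
      = cc i * qbinom (p - (i:ℤ)) s := by
  have e : ∀ t ∈ Finset.range (s+1), cc (t+i) * qbinom ((t:ℤ)+(i:ℤ)) i * qbinom p (s-t)
      = cc i * (qbinom (-(i:ℤ)) t * qbinom p (s-t)) := by
    intro t _
    rw [cc_mul i t hi, mul_assoc]
  rw [Finset.sum_congr rfl e, ← Finset.mul_sum, qbinom_vandermonde (-(i:ℤ)) p s,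
    show -(i:ℤ)+p = p - (i:ℤ) by ring]

lemma keyFull (i : ℕ) (p : ℤ) (s : ℕ) :
    ∑ t ∈ Finset.range (s+1), (cc (i+t) * qbinom p (s-t) * qbinom ((i:ℤ)+(t:ℤ)) i)
      = cc i * qbinom (p - (i:ℤ)) s
        + (if i = 0 then ∑ t ∈ Finset.range (s+1), cc t * qbinom p (s-t) else 0) := by
  by_cases hi : i = 0
  · subst hi
    rw [if_pos rfl]
    have h0 : cc 0 = 0 := by simp [cc]
    rw [h0, zero_mul, zero_add]
    apply Finset.sum_congr rfl
    intro t ht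
    simp only [zero_add, qbinom_zero_right, mul_one]
  · rw [if_neg hi, add_zero, ← key i hi p s]
    apply Finset.sum_congr rfl
    intro t ht
    rw [add_comm i t, add_comm (i:ℤ) (t:ℤ)]
    ring

/-! ### sum manipulation helpers -/

section helpers
variable {M : Type*} [AddCommMonoid M] {ι : Type*} [DecidableEq ι]

lemma sum_eq_of_support (s₁ s₂ : Finset ι) (f : ι → M)
    (h1 : ∀ x ∈ s₁, x ∉ s₂ → f x = 0) (h2 : ∀ x ∈ s₂, x ∉ s₁ → f x = 0) :
    ∑ x ∈ s₁, f x = ∑ x ∈ s₂, f x := by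
  have e1 : ∑ x ∈ s₁, f x = ∑ x ∈ s₁ ∪ s₂, f x :=
    Finset.sum_subset Finset.subset_union_left
      (fun x hx hnx => h2 x (by rcases Finset.mem_union.1 hx with h | h; exact absurd h hnx; exact h) hnx)
  have e2 : ∑ x ∈ s₂, f x = ∑ x ∈ s₁ ∪ s₂, f x :=
    Finset.sum_subset Finset.subset_union_right
      (fun x hx hnx => h1 x (by rcases Finset.mem_union.1 hx with h | h; exact h; exact absurd h hnx) hnx)
  rw [e1, e2]

lemma sum_shift (n i : ℕ) (f : ℕ → M)
    (h1 : ∀ l, l < i → f l = 0) (h2 : ∀ l, n ≤ l → f l = 0) :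
    ∑ l ∈ Finset.range n, f l = ∑ t ∈ Finset.range n, f (i + t) := by
  have e1 : ∑ l ∈ Finset.range n, f l = ∑ l ∈ Finset.Ico i n, f l := by
    rw [Finset.range_eq_Ico]
    exact (Finset.sum_subset (Finset.Ico_subset_Ico (Nat.zero_le i) le_rfl)
      (fun x hx hnx => h1 x (by simp at hx hnx; omega))).symm
  rw [e1, Finset.sum_Ico_eq_sum_range]
  exact Finset.sum_subset (Finset.range_subset_range.2 (by omega))
    (fun t ht hnt => h2 (i + t) (by simp at ht hnt; omega))

lemma sum_triangle (n : ℕ) (f : ℕ → ℕ → M)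
    (h : ∀ t j, n ≤ t + j → f t j = 0) :
    ∑ t ∈ Finset.range n, ∑ j ∈ Finset.range n, f t j
      = ∑ s ∈ Finset.range n, ∑ t ∈ Finset.range (s+1), f t (s - t) := by
  have A : ∀ t ∈ Finset.range n, ∑ j ∈ Finset.range n, f t j
      = ∑ s ∈ Finset.Ico t n, f t (s - t) := by
    intro t ht
    rw [Finset.sum_Ico_eq_sum_range]
    have : ∀ j ∈ Finset.range (n - t), f t (t + j - t) = f t j := by
      intro j _; rw [Nat.add_sub_cancel_left]
    rw [Finset.sum_congr rfl this]
    exact (Finset.sum_subset (Finset.range_subset_range.2 (by omega))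
      (fun j hj hnj => h t j (by simp at hj hnj; omega))).symm
  rw [Finset.sum_congr rfl A, Finset.range_eq_Ico, Finset.sum_Ico_Ico_comm]
  simp only [Finset.range_eq_Ico]

lemma sum_Icc_shift (a b c : ℤ) (f : ℤ → M) :
    ∑ x ∈ Finset.Icc a b, f (x + c) = ∑ x ∈ Finset.Icc (a+c) (b+c), f x := by
  rw [← Finset.map_add_right_Icc, Finset.sum_map]
  rfl

end helpers

/-! ### derivation iterates -/

variable {K : Type*} [CommRing K] [Algebra ℚ K] (d : Derivation ℚ K K)

lemma iter_zero (n : ℕ) : (⇑d)^[n] (0:K) = 0 := Function.iterate_fixed (map_zero d) n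

lemma iter_sum {ι : Type*} (n : ℕ) (s : Finset ι) (f : ι → K) :
    (⇑d)^[n] (∑ i ∈ s, f i) = ∑ i ∈ s, (⇑d)^[n] (f i) := by
  induction n with
  | zero => simp
  | succ n ih =>
    rw [Function.iterate_succ_apply', ih, map_sum]
    exact Finset.sum_congr rfl fun i _ => (Function.iterate_succ_apply' _ _ _).symm

lemma iter_smul (n : ℕ) (q : ℚ) (x : K) : (⇑d)^[n] (q • x) = q • (⇑d)^[n] x := by
  induction n with
  | zero => simp
  | succ n ih =>
    rw [Function.iterate_succ_apply', ih, Derivation.map_smul, Function.iterate_succ_apply']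

lemma iter_leibniz (n : ℕ) (a b : K) :
    (⇑d)^[n] (a * b)
      = ∑ i ∈ Finset.range (n+1), qbinom (n:ℤ) i • ((⇑d)^[i] a * (⇑d)^[n-i] b) := by
  induction n with
  | zero => simp [qbinom_zero_right]
  | succ n ih =>
    rw [Function.iterate_succ_apply', ih, map_sum]
    have e1 : ∀ i ∈ Finset.range (n+1),
        d (qbinom (n:ℤ) i • ((⇑d)^[i] a * (⇑d)^[n-i] b))
          = qbinom (n:ℤ) i • ((⇑d)^[i+1] a * (⇑d)^[n-i] b)
            + qbinom (n:ℤ) i • ((⇑d)^[i] a * (⇑d)^[n+1-i] b) := by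
      intro i hi
      have hni : n + 1 - i = (n - i) + 1 := by simp at hi; omega
      rw [Derivation.map_smul, Derivation.leibniz, smul_eq_mul, smul_eq_mul, smul_add, hni,
        Function.iterate_succ_apply' (⇑d) (n-i) b, Function.iterate_succ_apply' (⇑d) i a]
      rw [mul_comm ((⇑d)^[n-i] b) (d ((⇑d)^[i] a))]
      rw [add_comm]
    rw [Finset.sum_congr rfl e1, Finset.sum_add_distrib]
    set X : ℕ → K := fun i => (⇑d)^[i] a * (⇑d)^[n+1-i] b with hX
    have hcast : ((n+1:ℕ):ℤ) = (n:ℤ)+1 := by push_cast; ring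
    calc (∑ i ∈ Finset.range (n+1), qbinom (n:ℤ) i • ((⇑d)^[i+1] a * (⇑d)^[n-i] b))
          + ∑ i ∈ Finset.range (n+1), qbinom (n:ℤ) i • ((⇑d)^[i] a * (⇑d)^[n+1-i] b)
        = (∑ i ∈ Finset.range (n+1), qbinom (n:ℤ) i • X (i+1))
          + ∑ i ∈ Finset.range (n+1), qbinom (n:ℤ) i • X i := by
          congr 1
          apply Finset.sum_congr rfl; intro i hi
          have : n + 1 - (i+1) = n - i := by omega
          rw [hX]; simp only []; rw [this]
      _ = (∑ i ∈ Finset.range (n+1), qbinom (n:ℤ) i • X (i+1))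
          + (∑ i ∈ Finset.range n, qbinom (n:ℤ) (i+1) • X (i+1) + qbinom (n:ℤ) 0 • X 0) := by
          rw [Finset.sum_range_succ' (fun i => qbinom (n:ℤ) i • X i) n]
      _ = (∑ i ∈ Finset.range (n+1), qbinom (n:ℤ) i • X (i+1))
          + (∑ i ∈ Finset.range (n+1), qbinom (n:ℤ) (i+1) • X (i+1) + qbinom ((n:ℤ)+1) 0 • X 0) := by
          rw [Finset.sum_range_succ (fun i => qbinom (n:ℤ) (i+1) • X (i+1)) n,
            qbinom_cast_eq_zero (Nat.lt_succ_self n), zero_smul, add_zero,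
            qbinom_zero_right, qbinom_zero_right]
      _ = (∑ i ∈ Finset.range (n+1), qbinom ((n:ℤ)+1) (i+1) • X (i+1)) + qbinom ((n:ℤ)+1) 0 • X 0 := by
          rw [← add_assoc]
          congr 1
          rw [← Finset.sum_add_distrib]
          apply Finset.sum_congr rfl; intro i _
          rw [qbinom_pascal, add_smul]
          ring
      _ = ∑ i ∈ Finset.range (n+2), qbinom ((n:ℤ)+1) i • X i :=
          (Finset.sum_range_succ' (fun i => qbinom ((n:ℤ)+1) i • X i) (n+1)).symm
      _ = ∑ i ∈ Finset.range (n+1+1), qbinom ((n+1:ℕ):ℤ) i • ((⇑d)^[i] a * (⇑d)^[n+1-i] b) := by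
          rw [hcast]

/-! ### finsum expansions -/

lemma adLog_def (C : ℤ → K) (k : ℤ) :
    adLog (⇑d) C k = ∑ᶠ l : ℕ, cc l • (⇑d)^[l] (C (k + l)) := rfl

lemma pdMul_sum (C D : ℤ → K) (NC ND : ℤ)
    (hC : ∀ p, NC < p → C p = 0) (hD : ∀ p, ND < p → D p = 0) (k : ℤ)
    (P' : Finset ℤ) (R' : Finset ℕ)
    (hP' : Finset.Icc (k - ND) NC ⊆ P') (hR' : ∀ j : ℕ, (j:ℤ) ≤ NC + ND - k → j ∈ R') :
    pdMul (⇑d) C D k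
      = ∑ p ∈ P', ∑ j ∈ R', qbinom p j • (C p * (⇑d)^[j] (D (k - p + j))) := by
  rw [pdMul, finsum_eq_sum_of_support_subset _ (s := P' ×ˢ R'), Finset.sum_product]
  intro x hx
  simp only [Function.mem_support] at hx
  simp only [Finset.coe_product, Set.mem_prod, Finset.mem_coe, Finset.mem_product] at *
  by_cases h1 : NC < x.1
  · exact absurd (by rw [hC x.1 h1]; simp) hx
  · push_neg at h1
    by_cases h2 : ND < k - x.1 + x.2
    · exact absurd (by rw [hD _ h2, iter_zero]; simp) hx
    · push_neg at h2
      constructor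
      · apply hP'; rw [Finset.mem_Icc]; omega
      · apply hR'; omega

lemma adLog_sum (C : ℤ → K) (NC : ℤ) (hC : ∀ p, NC < p → C p = 0) (k : ℤ)
    (R' : Finset ℕ) (hR' : ∀ l : ℕ, l ≠ 0 → (l:ℤ) ≤ NC - k → l ∈ R') :
    adLog (⇑d) C k = ∑ l ∈ R', cc l • (⇑d)^[l] (C (k + l)) := by
  rw [adLog_def, finsum_eq_sum_of_support_subset _ (s := R')]
  intro l hl
  simp only [Function.mem_support] at hl
  by_cases h0 : l = 0
  · exact absurd (by rw [h0]; simp [cc]) hl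
  · by_cases h1 : NC < k + l
    · exact absurd (by rw [hC _ h1, iter_zero]; simp) hl
    · exact hR' l h0 (by omega)

lemma adLog_bdd (C : ℤ → K) (NC : ℤ) (hC : ∀ p, NC < p → C p = 0) :
    ∀ p, NC < p → adLog (⇑d) C p = 0 := by
  intro p hp
  rw [adLog_def]
  apply finsum_eq_zero_of_forall_eq_zero
  intro l
  by_cases h0 : l = 0
  · rw [h0]; simp [cc]
  · rw [hC (p + l) (by omega), iter_zero]; simp

lemma pdMul_bdd (C D : ℤ → K) (NC ND : ℤ)
    (hC : ∀ p, NC < p → C p = 0) (hD : ∀ p, ND < p → D p = 0) :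
    ∀ k, NC + ND < k → pdMul (⇑d) C D k = 0 := by
  intro k hk
  rw [pdMul]
  apply finsum_eq_zero_of_forall_eq_zero
  intro x
  by_cases h1 : NC < x.1
  · rw [hC _ h1]; simp
  · rw [hD (k - x.1 + x.2) (by omega), iter_zero]; simp

lemma core (A B : ℤ → K) (NA NB : ℤ)
    (hA : ∀ k, NA < k → A k = 0) (hB : ∀ k, NB < k → B k = 0)
    (m : ℤ) (T : ℕ) (hT : NA + NB - m ≤ (T:ℤ)) (p : ℤ) (hp1 : m - NB ≤ p) (hp2 : p ≤ NA) :
    ∑ l ∈ Finset.range (T+1), ∑ j ∈ Finset.range (T+1),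
        (cc l * qbinom p j) • (⇑d)^[l] (A p * (⇑d)^[j] (B (m + l - p + j)))
    = (∑ i ∈ Finset.range (T+1), ∑ s ∈ Finset.range (T+1),
        (cc i * qbinom (p - (i:ℤ)) s) • ((⇑d)^[i] (A p) * (⇑d)^[s] (B (m + i - p + s))))
      + ∑ s ∈ Finset.range (T+1),
          (∑ t ∈ Finset.range (s+1), cc t * qbinom p (s - t)) • (A p * (⇑d)^[s] (B (m - p + s))) := by
  have hBz : ∀ (j : ℕ) (k : ℤ), NB < k → (⇑d)^[j] (B k) = 0 := by
    intro j k h; rw [hB k h, iter_zero]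
  -- Step 1: Leibniz + flatten scalars
  have step1 : ∀ l ∈ Finset.range (T+1), ∀ j ∈ Finset.range (T+1),
      (cc l * qbinom p j) • (⇑d)^[l] (A p * (⇑d)^[j] (B (m + l - p + j)))
      = ∑ i ∈ Finset.range (T+1),
          (cc l * qbinom p j * qbinom (l:ℤ) i) •
            ((⇑d)^[i] (A p) * (⇑d)^[(l-i)+j] (B (m + l - p + j))) := by
    intro l hl j hj
    rw [iter_leibniz]
    have ext : ∑ i ∈ Finset.range (l+1), qbinom (l:ℤ) i •
          ((⇑d)^[i] (A p) * (⇑d)^[l-i] ((⇑d)^[j] (B (m + l - p + j))))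
        = ∑ i ∈ Finset.range (T+1), qbinom (l:ℤ) i •
          ((⇑d)^[i] (A p) * (⇑d)^[l-i] ((⇑d)^[j] (B (m + l - p + j)))) := by
      apply Finset.sum_subset (Finset.range_subset_range.2 (by simp at hl; omega))
      intro i _ hni
      rw [qbinom_cast_eq_zero (by simp at hni ⊢; omega), zero_smul]
    rw [ext, Finset.smul_sum]
    apply Finset.sum_congr rfl
    intro i _
    rw [smul_smul, ← Function.iterate_add_apply]
  rw [Finset.sum_congr rfl (fun l hl => Finset.sum_congr rfl (fun j hj => step1 l hl j hj))]
  -- Step 2: reorder sums to i, l, j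
  rw [Finset.sum_congr rfl (fun l _ => Finset.sum_comm), Finset.sum_comm]
  -- Step 3-6 per i
  have inner : ∀ i ∈ Finset.range (T+1),
      ∑ l ∈ Finset.range (T+1), ∑ j ∈ Finset.range (T+1),
        (cc l * qbinom p j * qbinom (l:ℤ) i) •
          ((⇑d)^[i] (A p) * (⇑d)^[(l-i)+j] (B (m + l - p + j)))
      = ∑ s ∈ Finset.range (T+1),
          (∑ t ∈ Finset.range (s+1), (cc (i+t) * qbinom p (s-t) * qbinom ((i:ℤ)+(t:ℤ)) i)) •
            ((⇑d)^[i] (A p) * (⇑d)^[s] (B (m + i - p + s))) := by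
    intro i hi
    rw [sum_shift (T+1) i _ ?_ ?_]
    rotate_left
    · intro l hl
      apply Finset.sum_eq_zero
      intro j _
      rw [qbinom_cast_eq_zero hl]
      simp
    · intro l hl
      apply Finset.sum_eq_zero
      intro j _
      rw [hBz (l-i+j) (m + l - p + j) (by push_cast; omega)]
      simp
    have simp1 : ∀ t ∈ Finset.range (T+1), ∀ j ∈ Finset.range (T+1),
        (cc (i+t) * qbinom p j * qbinom ((i+t : ℕ):ℤ) i) •
          ((⇑d)^[i] (A p) * (⇑d)^[((i+t)-i)+j] (B (m + (i+t : ℕ) - p + j)))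
        = (cc (i+t) * qbinom p j * qbinom ((i:ℤ)+(t:ℤ)) i) •
          ((⇑d)^[i] (A p) * (⇑d)^[t+j] (B (m + i + t - p + j))) := by
      intro t _ j _
      have e1 : (i+t) - i = t := by omega
      have e2 : ((i+t : ℕ):ℤ) = (i:ℤ)+(t:ℤ) := by push_cast; ring
      have e3 : m + ((i+t : ℕ):ℤ) - p + j = m + i + t - p + j := by push_cast; ring
      rw [e3, e2, e1]
    rw [Finset.sum_congr rfl (fun t ht => Finset.sum_congr rfl (fun j hj => simp1 t ht j hj))]
    rw [sum_triangle (T+1) _ ?_]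
    rotate_left
    · intro t j htj
      rw [hBz (t+j) (m + i + t - p + j) (by push_cast; omega)]
      simp
    apply Finset.sum_congr rfl
    intro s hs
    rw [Finset.sum_smul]
    apply Finset.sum_congr rfl
    intro t ht
    have hts : t ≤ s := by simp at ht; omega
    have et : t + (s - t) = s := by omega
    have ea : m + (i:ℤ) + (t:ℤ) - p + ((s-t : ℕ):ℤ) = m + (i:ℤ) - p + (s:ℤ) := by
      push_cast [Nat.cast_sub hts]; ring
    rw [et, ea]
  rw [Finset.sum_congr rfl inner]
  -- Step 7/8: apply keyFull and split
  have split : ∀ i ∈ Finset.range (T+1), ∀ s ∈ Finset.range (T+1),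
      (∑ t ∈ Finset.range (s+1), (cc (i+t) * qbinom p (s-t) * qbinom ((i:ℤ)+(t:ℤ)) i)) •
        ((⇑d)^[i] (A p) * (⇑d)^[s] (B (m + i - p + s)))
      = (cc i * qbinom (p - (i:ℤ)) s) • ((⇑d)^[i] (A p) * (⇑d)^[s] (B (m + i - p + s)))
        + (if i = 0 then (∑ t ∈ Finset.range (s+1), cc t * qbinom p (s - t)) •
            ((⇑d)^[i] (A p) * (⇑d)^[s] (B (m + i - p + s))) else 0) := by
    intro i _ s _
    rw [keyFull, add_smul, ite_smul, zero_smul]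
  rw [Finset.sum_congr rfl (fun i hi => Finset.sum_congr rfl (fun s hs => split i hi s hs))]
  rw [Finset.sum_congr rfl (fun i _ => Finset.sum_add_distrib), Finset.sum_add_distrib]
  congr 1
  rw [Finset.sum_comm]
  apply Finset.sum_congr rfl
  intro s _
  rw [Finset.sum_ite_eq' (Finset.range (T+1)) 0
    (fun i => (∑ t ∈ Finset.range (s+1), cc t * qbinom p (s - t)) •
        ((⇑d)^[i] (A p) * (⇑d)^[s] (B (m + i - p + s))))]
  rw [if_pos (by simp)]
  simp only [Function.iterate_zero_apply, Nat.cast_zero, add_zero]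



lemma r1trans (A B : ℤ → K) (NA NB : ℤ)
    (hA : ∀ k, NA < k → A k = 0) (hB : ∀ k, NB < k → B k = 0)
    (m : ℤ) (T : ℕ) (hT : NA + NB - m ≤ (T:ℤ)) :
    pdMul (⇑d) (adLog (⇑d) A) B m
      = ∑ p ∈ Finset.Icc (m - NB) NA, ∑ i ∈ Finset.range (T+1), ∑ s ∈ Finset.range (T+1),
          (cc i * qbinom (p - (i:ℤ)) s) • ((⇑d)^[i] (A p) * (⇑d)^[s] (B (m + i - p + s))) := by
  have hAz : ∀ (n : ℕ) (k : ℤ), NA < k → (⇑d)^[n] (A k) = 0 := fun n k h => by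
    rw [hA k h, iter_zero]
  have hBz : ∀ (n : ℕ) (k : ℤ), NB < k → (⇑d)^[n] (B k) = 0 := fun n k h => by
    rw [hB k h, iter_zero]
  rw [pdMul_sum d (adLog (⇑d) A) B NA NB (adLog_bdd d A NA hA) hB m
    (Finset.Icc (m-NB) NA) (Finset.range (T+1)) subset_rfl
    (fun j hj => Finset.mem_range.2 (by omega))]
  have e1 : ∀ p ∈ Finset.Icc (m-NB) NA, ∀ j ∈ Finset.range (T+1),
      qbinom p j • (adLog (⇑d) A p * (⇑d)^[j] (B (m - p + j)))
      = ∑ l ∈ Finset.range (T+1), (qbinom p j * cc l) •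
          ((⇑d)^[l] (A (p + l)) * (⇑d)^[j] (B (m - p + j))) := by
    intro p hp j _
    simp only [Finset.mem_Icc] at hp
    rw [adLog_sum d A NA hA p (Finset.range (T+1))
      (fun l hl0 hl => Finset.mem_range.2 (by omega)), Finset.sum_mul, Finset.smul_sum]
    apply Finset.sum_congr rfl
    intro l _
    rw [smul_mul_assoc, smul_smul]
  rw [Finset.sum_congr rfl (fun p hp => Finset.sum_congr rfl (fun j hj => e1 p hp j hj))]
  rw [Finset.sum_congr rfl (fun p _ => Finset.sum_comm), Finset.sum_comm]
  have e2 : ∀ l ∈ Finset.range (T+1),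
      ∑ p ∈ Finset.Icc (m-NB) NA, ∑ j ∈ Finset.range (T+1),
        (qbinom p j * cc l) • ((⇑d)^[l] (A (p + l)) * (⇑d)^[j] (B (m - p + j)))
      = ∑ p ∈ Finset.Icc (m-NB) NA, ∑ s ∈ Finset.range (T+1),
        (cc l * qbinom (p - (l:ℤ)) s) • ((⇑d)^[l] (A p) * (⇑d)^[s] (B (m + l - p + s))) := by
    intro l _
    calc ∑ p ∈ Finset.Icc (m-NB) NA, ∑ j ∈ Finset.range (T+1),
          (qbinom p j * cc l) • ((⇑d)^[l] (A (p + l)) * (⇑d)^[j] (B (m - p + j)))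
        = ∑ p ∈ Finset.Icc (m-NB-l) (NA-l), ∑ j ∈ Finset.range (T+1),
          (qbinom p j * cc l) • ((⇑d)^[l] (A (p + l)) * (⇑d)^[j] (B (m - p + j))) := by
          apply sum_eq_of_support
          · intro x hx hnx
            simp only [Finset.mem_Icc] at hx hnx
            apply Finset.sum_eq_zero
            intro j _
            rw [hAz l (x + l) (by omega), zero_mul, smul_zero]
          · intro x hx hnx
            simp only [Finset.mem_Icc] at hx hnx
            apply Finset.sum_eq_zero
            intro j _
            rw [hBz j (m - x + j) (by omega), mul_zero, smul_zero]
      _ = ∑ p ∈ Finset.Icc (m-NB) NA, ∑ j ∈ Finset.range (T+1),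
          (qbinom (p + -(l:ℤ)) j * cc l) •
            ((⇑d)^[l] (A ((p + -(l:ℤ)) + l)) * (⇑d)^[j] (B (m - (p + -(l:ℤ)) + j))) := by
          rw [show m-NB-(l:ℤ) = (m-NB) + -(l:ℤ) by ring, show NA-(l:ℤ) = NA + -(l:ℤ) by ring,
            ← sum_Icc_shift]
      _ = ∑ p ∈ Finset.Icc (m-NB) NA, ∑ s ∈ Finset.range (T+1),
          (cc l * qbinom (p - (l:ℤ)) s) • ((⇑d)^[l] (A p) * (⇑d)^[s] (B (m + l - p + s))) := by
          apply Finset.sum_congr rfl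
          intro p _
          apply Finset.sum_congr rfl
          intro j _
          rw [show p + -(l:ℤ) + l = p by ring, show m - (p + -(l:ℤ)) + (j:ℤ) = m + l - p + j by ring,
            show p + -(l:ℤ) = p - (l:ℤ) by ring, mul_comm (qbinom (p - (l:ℤ)) j) (cc l)]
  rw [Finset.sum_congr rfl e2, Finset.sum_comm]

lemma r2trans (A B : ℤ → K) (NA NB : ℤ)
    (hA : ∀ k, NA < k → A k = 0) (hB : ∀ k, NB < k → B k = 0)
    (m : ℤ) (T : ℕ) (hT : NA + NB - m ≤ (T:ℤ)) :
    pdMul (⇑d) A (adLog (⇑d) B) m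
      = ∑ p ∈ Finset.Icc (m - NB) NA, ∑ s ∈ Finset.range (T+1),
          (∑ t ∈ Finset.range (s+1), cc t * qbinom p (s - t)) • (A p * (⇑d)^[s] (B (m - p + s))) := by
  have hBz : ∀ (n : ℕ) (k : ℤ), NB < k → (⇑d)^[n] (B k) = 0 := fun n k h => by
    rw [hB k h, iter_zero]
  rw [pdMul_sum d A (adLog (⇑d) B) NA NB hA (adLog_bdd d B NB hB) m
    (Finset.Icc (m-NB) NA) (Finset.range (T+1)) subset_rfl
    (fun j hj => Finset.mem_range.2 (by omega))]
  apply Finset.sum_congr rfl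
  intro p hp
  simp only [Finset.mem_Icc] at hp
  have e1 : ∀ j ∈ Finset.range (T+1),
      qbinom p j • (A p * (⇑d)^[j] (adLog (⇑d) B (m - p + j)))
      = ∑ l ∈ Finset.range (T+1), (qbinom p j * cc l) • (A p * (⇑d)^[j+l] (B (m - p + j + l))) := by
    intro j hj
    simp only [Finset.mem_range] at hj
    rw [adLog_sum d B NB hB (m-p+j) (Finset.range (T+1))
      (fun l h0 hl => Finset.mem_range.2 (by omega)),
      iter_sum, Finset.mul_sum, Finset.smul_sum]
    apply Finset.sum_congr rfl
    intro l _
    rw [iter_smul, ← Function.iterate_add_apply, mul_smul_comm, smul_smul]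
  rw [Finset.sum_congr rfl e1]
  rw [sum_triangle (T+1) _ ?_]
  rotate_left
  · intro j l hjl
    rw [hBz (j+l) (m - p + j + l) (by omega), mul_zero, smul_zero]
  apply Finset.sum_congr rfl
  intro s _
  have e2 : ∀ j ∈ Finset.range (s+1),
      (qbinom p j * cc (s-j)) • (A p * (⇑d)^[j+(s-j)] (B (m - p + j + ((s-j:ℕ):ℤ))))
      = (qbinom p j * cc (s-j)) • (A p * (⇑d)^[s] (B (m - p + s))) := by
    intro j hj
    simp only [Finset.mem_range] at hj
    have ej : j + (s-j) = s := by omega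
    have ea : m - p + (j:ℤ) + ((s-j:ℕ):ℤ) = m - p + s := by
      push_cast [Nat.cast_sub (by omega : j ≤ s)]; ring
    rw [ej, ea]
  rw [Finset.sum_congr rfl e2, ← Finset.sum_smul]
  congr 1
  have hrefl := Finset.sum_range_reflect (fun t => cc t * qbinom p (s - t)) (s+1)
  rw [← hrefl]
  apply Finset.sum_congr rfl
  intro j hj
  simp only [Finset.mem_range] at hj
  have e3 : s + 1 - 1 - j = s - j := by omega
  have e4 : s - (s - j) = j := by omega
  rw [e3, e4, mul_comm (qbinom p j) (cc (s-j))]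

end AdLogAux

open AdLogAux Finset in
/-- `ad_{log D}` is a derivation of the algebra of integer-order
pseudodifferential symbols over a differential field of characteristic 0:
`[log D, A∘B] = [log D, A]∘B + A∘[log D, B]`. -/
theorem adLog_derivation {K : Type*} [Field K] [CharZero K] (d : Derivation ℚ K K)
    (A B : ℤ → K) (hA : OrderBdd A) (hB : OrderBdd B) :
    adLog (⇑d) (pdMul (⇑d) A B)
      = fun m => pdMul (⇑d) (adLog (⇑d) A) B m + pdMul (⇑d) A (adLog (⇑d) B) m := by
  obtain ⟨NA, hA⟩ := hA
  obtain ⟨NB, hB⟩ := hB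
  funext m
  set T : ℕ := (NA + NB - m).toNat with hTdef
  have hT : NA + NB - m ≤ (T:ℤ) := Int.self_le_toNat _
  rw [adLog_sum d (pdMul (⇑d) A B) (NA+NB) (pdMul_bdd d A B NA NB hA hB) m
    (Finset.range (T+1)) (fun l h0 hl => Finset.mem_range.2 (by omega))]
  have e1 : ∀ l ∈ Finset.range (T+1), cc l • (⇑d)^[l] (pdMul (⇑d) A B (m + l))
      = ∑ p ∈ Finset.Icc (m-NB) NA, ∑ j ∈ Finset.range (T+1),
          (cc l * qbinom p j) • (⇑d)^[l] (A p * (⇑d)^[j] (B (m + l - p + j))) := by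
    intro l hl
    simp only [Finset.mem_range] at hl
    rw [pdMul_sum d A B NA NB hA hB (m + l) (Finset.Icc (m-NB) NA) (Finset.range (T+1))
      (Finset.Icc_subset_Icc (by omega) le_rfl) (fun j hj => Finset.mem_range.2 (by omega)),
      iter_sum, Finset.smul_sum]
    apply Finset.sum_congr rfl
    intro p _
    rw [iter_sum, Finset.smul_sum]
    apply Finset.sum_congr rfl
    intro j _
    rw [iter_smul, smul_smul]
  rw [Finset.sum_congr rfl e1, Finset.sum_comm]
  have e2 : ∀ p ∈ Finset.Icc (m-NB) NA,
      ∑ l ∈ Finset.range (T+1), ∑ j ∈ Finset.range (T+1),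
        (cc l * qbinom p j) • (⇑d)^[l] (A p * (⇑d)^[j] (B (m + l - p + j)))
      = (∑ i ∈ Finset.range (T+1), ∑ s ∈ Finset.range (T+1),
          (cc i * qbinom (p - (i:ℤ)) s) • ((⇑d)^[i] (A p) * (⇑d)^[s] (B (m + i - p + s))))
        + ∑ s ∈ Finset.range (T+1),
            (∑ t ∈ Finset.range (s+1), cc t * qbinom p (s - t)) • (A p * (⇑d)^[s] (B (m - p + s))) := by
    intro p hp
    simp only [Finset.mem_Icc] at hp
    exact core d A B NA NB hA hB m T hT p hp.1 hp.2
  rw [Finset.sum_congr rfl e2, Finset.sum_add_distrib,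
    ← r1trans d A B NA NB hA hB m T hT, ← r2trans d A B NA NB hA hB m T hT]
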